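/- Special case of the decoupling identity (T = identity, f ≡ 1): for θ ∈ C(m) and matrices B₁,...,B_m, (−1)^{|θ|} ∑_{σ ∈ C(θ)} (−1)^{|θ|−|σ|} B⃗_σ(x) B⃗_{(θ−σ)^t}(y) = ∑_{σ ∈ C(θ)} [∑_{α ∈ C(σ)} (−1)^{|θ|−|α|} B⃗_α(x)(m_Q B⃗)_{(σ−α)^t}] · [∑_{β ∈ C(σ^c)} (−1)^{|θ|−|β|} (m_Q B⃗)_β B⃗_{(σ^c−β)^t}(y)]. -/

import Mathlib

open Finset MeasureTheory

/-- Reverse-ordered product `B⃗_s = B_{s(j)} ⋯ B_{s(1)}` (indices in decreasing order). -/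
noncomputable def prodRev {n : ℕ} (B : ℕ → Matrix (Fin n) (Fin n) ℂ) (s : Finset ℕ) :
    Matrix (Fin n) (Fin n) ℂ :=
  (((s.sort (· ≤ ·)).reverse).map B).prod

/-- Forward product `B⃗_{s^t} = B_{s(1)} ⋯ B_{s(j)}` (indices in increasing order). -/
noncomputable def prodFwd {n : ℕ} (B : ℕ → Matrix (Fin n) (Fin n) ℂ) (s : Finset ℕ) :
    Matrix (Fin n) (Fin n) ℂ :=
  ((s.sort (· ≤ ·)).map B).prod

variable {n : ℕ}

lemma sort_insert_max {u : ℕ} {s : Finset ℕ} (h : ∀ x ∈ s, x < u) :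
    (insert u s).sort (· ≤ ·) = s.sort (· ≤ ·) ++ [u] := by
  have hu : u ∉ s := fun hmem => lt_irrefl u (h u hmem)
  refine (fun hp h1 h2 => List.Perm.eq_of_pairwise' (r := (· ≤ ·)) h1 h2 hp) ?_ ?_ ?_
  · rw [← Multiset.coe_eq_coe, ← Multiset.coe_add, Finset.sort_eq, Finset.sort_eq,
      Finset.insert_val, Multiset.ndinsert_of_notMem hu]
    simp only [Multiset.coe_singleton]
    rw [add_comm, Multiset.singleton_add]
  · exact Finset.pairwise_sort _ _
  · rw [List.pairwise_append]
    refine ⟨Finset.pairwise_sort _ _, List.pairwise_singleton _ u, ?_⟩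
    intro a ha b hb
    simp only [List.mem_singleton] at hb
    subst hb
    exact (h a ((Finset.mem_sort _).mp ha)).le

lemma prodFwd_insert_max (M : ℕ → Matrix (Fin n) (Fin n) ℂ) {u : ℕ} {s : Finset ℕ}
    (h : ∀ x ∈ s, x < u) : prodFwd M (insert u s) = prodFwd M s * M u := by
  simp [prodFwd, sort_insert_max h]

lemma prodRev_insert_max (M : ℕ → Matrix (Fin n) (Fin n) ℂ) {u : ℕ} {s : Finset ℕ}
    (h : ∀ x ∈ s, x < u) : prodRev M (insert u s) = M u * prodRev M s := by
  simp [prodRev, sort_insert_max h]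

@[simp] lemma prodFwd_empty (M : ℕ → Matrix (Fin n) (Fin n) ℂ) : prodFwd M ∅ = 1 := by
  simp [prodFwd]

@[simp] lemma prodRev_empty (M : ℕ → Matrix (Fin n) (Fin n) ℂ) : prodRev M ∅ = 1 := by
  simp [prodRev]

lemma key_sum (M : ℕ → Matrix (Fin n) (Fin n) ℂ) (U : Finset ℕ) :
    ∑ γ ∈ U.powerset, ((-1 : ℂ) ^ (U.card - γ.card)) • (prodFwd M γ * prodRev M (U \ γ)) =
      if U = ∅ then 1 else 0 := by
  rcases U.eq_empty_or_nonempty with hU | hU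
  · subst hU; simp
  · rw [if_neg hU.ne_empty]
    obtain ⟨u, hu⟩ : ∃ u, u = U.max' hU := ⟨_, rfl⟩
    set V := U.erase u with hV
    have huV : u ∉ V := notMem_erase _ _
    have hUV : U = insert u V := by
      rw [hV, hu, insert_erase (U.max'_mem hU)]
    have hlt : ∀ x ∈ V, x < u := fun x hx =>
      lt_of_le_of_ne (hu ▸ U.le_max' x (mem_of_mem_erase hx)) (ne_of_mem_erase hx)
    rw [hUV, Finset.sum_powerset_insert huV, ← Finset.sum_add_distrib]
    apply Finset.sum_eq_zero
    intro γ hγ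
    have hγV : γ ⊆ V := mem_powerset.mp hγ
    have huγ : u ∉ γ := fun h => huV (hγV h)
    have hcard : (insert u V).card = V.card + 1 := card_insert_of_notMem huV
    have hγcard : γ.card ≤ V.card := card_le_card hγV
    have h1 : (insert u V) \ γ = insert u (V \ γ) := insert_sdiff_of_notMem _ huγ
    have h2 : (insert u V) \ (insert u γ) = V \ γ := by
      rw [insert_sdiff_insert]
      ext a
      simp only [mem_sdiff, mem_insert, not_or]
      exact ⟨fun ⟨h1, _, h2⟩ => ⟨h1, h2⟩, fun ⟨h1, h2⟩ => ⟨h1, fun h => huV (h ▸ h1), h2⟩⟩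
    have h3 : prodRev M (insert u (V \ γ)) = M u * prodRev M (V \ γ) :=
      prodRev_insert_max M (fun x hx => hlt x (mem_sdiff.mp hx).1)
    have h4 : prodFwd M (insert u γ) = prodFwd M γ * M u :=
      prodFwd_insert_max M (fun x hx => hlt x (hγV hx))
    have h5 : (insert u γ).card = γ.card + 1 := card_insert_of_notMem huγ
    rw [h1, h2, h3, h4, h5, hcard]
    have e1 : V.card + 1 - γ.card = (V.card - γ.card) + 1 := by omega
    have e2 : V.card + 1 - (γ.card + 1) = V.card - γ.card := by omega
    rw [e1, e2, pow_succ, mul_comm, neg_one_mul, neg_smul, mul_assoc]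
    exact neg_add_cancel _

lemma sum_powerset_compl_reindex {β : Type*} [AddCommMonoid β] (U : Finset ℕ)
    (g : Finset ℕ → β) :
    ∑ b ∈ U.powerset, g b = ∑ b ∈ U.powerset, g (U \ b) := by
  apply Finset.sum_nbij' (i := fun b => U \ b) (j := fun b => U \ b)
  · intro a ha; exact mem_powerset.mpr (sdiff_subset)
  · intro a ha; exact mem_powerset.mpr (sdiff_subset)
  · intro a ha; exact Finset.sdiff_sdiff_eq_self (mem_powerset.mp ha)
  · intro a ha; exact Finset.sdiff_sdiff_eq_self (mem_powerset.mp ha)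
  · intro a ha; rw [Finset.sdiff_sdiff_eq_self (mem_powerset.mp ha)]

lemma sum_powerset_swap {β : Type*} [AddCommMonoid β] (W : Finset ℕ)
    (f : Finset ℕ → Finset ℕ → β) :
    ∑ a ∈ W.powerset, ∑ b ∈ (W \ a).powerset, f a b =
      ∑ b ∈ W.powerset, ∑ a ∈ (W \ b).powerset, f a b := by
  rw [Finset.sum_sigma', Finset.sum_sigma']
  apply Finset.sum_nbij' (i := fun p => ⟨p.2, p.1⟩) (j := fun p => ⟨p.2, p.1⟩)
  · rintro ⟨a, b⟩ hab
    simp only [Finset.mem_sigma, mem_powerset, subset_sdiff] at hab ⊢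
    obtain ⟨ha, hb, hd⟩ := hab
    exact ⟨hb, ha, hd.symm⟩
  · rintro ⟨a, b⟩ hab
    simp only [Finset.mem_sigma, mem_powerset, subset_sdiff] at hab ⊢
    obtain ⟨ha, hb, hd⟩ := hab
    exact ⟨hb, ha, hd.symm⟩
  · rintro ⟨a, b⟩ _; rfl
  · rintro ⟨a, b⟩ _; rfl
  · rintro ⟨a, b⟩ _; rfl

lemma sum_powerset_sub {β : Type*} [AddCommMonoid β] (θ : Finset ℕ)
    (f : Finset ℕ → Finset ℕ → β) :
    ∑ σ ∈ θ.powerset, ∑ α ∈ σ.powerset, f σ α =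
      ∑ α ∈ θ.powerset, ∑ γ ∈ (θ \ α).powerset, f (α ∪ γ) α := by
  rw [Finset.sum_sigma', Finset.sum_sigma']
  apply Finset.sum_nbij' (i := fun p => ⟨p.2, p.1 \ p.2⟩) (j := fun p => ⟨p.1 ∪ p.2, p.1⟩)
  · rintro ⟨σ, α⟩ hab
    simp only [Finset.mem_sigma, mem_powerset] at hab ⊢
    exact ⟨hab.2.trans hab.1, sdiff_subset_sdiff hab.1 le_rfl⟩
  · rintro ⟨α, γ⟩ hab
    simp only [Finset.mem_sigma, mem_powerset, subset_sdiff] at hab ⊢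
    exact ⟨union_subset hab.1 hab.2.1, subset_union_left⟩
  · rintro ⟨σ, α⟩ hab
    simp only [Finset.mem_sigma, mem_powerset] at hab
    simp only [Sigma.mk.inj_iff, heq_eq_eq]
    exact ⟨union_sdiff_of_subset hab.2, trivial⟩
  · rintro ⟨α, γ⟩ hab
    simp only [Finset.mem_sigma, mem_powerset, subset_sdiff] at hab
    simp only [Sigma.mk.inj_iff, heq_eq_eq]
    exact ⟨trivial, union_sdiff_cancel_left hab.2.2.symm⟩
  · rintro ⟨σ, α⟩ hab
    simp only [Finset.mem_sigma, mem_powerset] at hab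
    rw [union_sdiff_of_subset hab.2]

lemma middle_collapse (Mc : ℕ → Matrix (Fin n) (Fin n) ℂ) (W : Finset ℕ)
    (X : Matrix (Fin n) (Fin n) ℂ) (Z : Finset ℕ → Matrix (Fin n) (Fin n) ℂ) (a : ℕ) :
    ∑ γ ∈ W.powerset, ∑ β ∈ (W \ γ).powerset,
      ((-1 : ℂ) ^ (a + β.card)) • (X * prodFwd Mc γ * (prodRev Mc β * Z ((W \ γ) \ β))) =
      ((-1 : ℂ) ^ a) • (X * Z W) := by
  have step1 : ∀ γ ∈ W.powerset,
      (∑ β ∈ (W \ γ).powerset,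
        ((-1 : ℂ) ^ (a + β.card)) • (X * prodFwd Mc γ * (prodRev Mc β * Z ((W \ γ) \ β)))) =
      ∑ δ ∈ (W \ γ).powerset,
        ((-1 : ℂ) ^ (a + ((W \ γ) \ δ).card)) •
          (X * prodFwd Mc γ * (prodRev Mc ((W \ γ) \ δ) * Z ((W \ γ) \ ((W \ γ) \ δ)))) :=
    fun γ _ => sum_powerset_compl_reindex (W \ γ) _
  rw [Finset.sum_congr rfl step1, sum_powerset_swap]
  have step2 : ∀ δ ∈ W.powerset,
      (∑ γ ∈ (W \ δ).powerset,
        ((-1 : ℂ) ^ (a + ((W \ γ) \ δ).card)) •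
          (X * prodFwd Mc γ * (prodRev Mc ((W \ γ) \ δ) * Z ((W \ γ) \ ((W \ γ) \ δ))))) =
      X * (((-1 : ℂ) ^ a) • if W \ δ = ∅ then 1 else 0) * Z δ := by
    intro δ hδ
    have hδW : δ ⊆ W := mem_powerset.mp hδ
    rw [← key_sum Mc (W \ δ), smul_sum, Finset.mul_sum, Finset.sum_mul]
    refine Finset.sum_congr rfl fun γ hγ => ?_
    have hγ' : γ ⊆ W \ δ := mem_powerset.mp hγ
    have hγW : γ ⊆ W := hγ'.trans sdiff_subset
    have hdis : Disjoint γ δ := (subset_sdiff.mp hγ').2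
    have e1 : (W \ γ) \ δ = (W \ δ) \ γ := sdiff_right_comm W γ δ
    have e2 : (W \ γ) \ ((W \ γ) \ δ) = δ :=
      Finset.sdiff_sdiff_eq_self (subset_sdiff.mpr ⟨hδW, hdis.symm⟩)
    have e3 : ((W \ δ) \ γ).card = (W \ δ).card - γ.card := card_sdiff_of_subset hγ'
    rw [e2, e1, e3]
    have hassoc : X * prodFwd Mc γ * (prodRev Mc ((W \ δ) \ γ) * Z δ) =
        X * (prodFwd Mc γ * prodRev Mc ((W \ δ) \ γ)) * Z δ := by
      simp only [mul_assoc]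
    rw [hassoc, smul_smul, ← pow_add, mul_smul_comm, smul_mul_assoc]
  rw [Finset.sum_congr rfl step2]
  rw [Finset.sum_eq_single_of_mem W (mem_powerset_self W)]
  · simp [mul_smul_comm, smul_mul_assoc]
  · intro δ hδ hne
    have : W \ δ ≠ ∅ := by
      intro h
      exact hne (Finset.Subset.antisymm (mem_powerset.mp hδ) (sdiff_eq_empty_iff_subset.mp h))
    rw [if_neg this]
    simp

/-- decoupling identity, special case `T = id`, `f ≡ 1`.
For a tuple `θ ∈ C(m)` and matrix symbols `B₁, …, B_m`, with `Mc` the tuple of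
entrywise averages over a finite-measure set `Q`,
`(−1)^{|θ|} ∑_{σ≤θ} (−1)^{|θ|−|σ|} B⃗_σ(x) B⃗_{(θ−σ)^t}(y)` equals the decoupled
double sum. -/
theorem decoupling_identity_matrices {d n m : ℕ}
    (B : ℕ → (Fin d → ℝ) → Matrix (Fin n) (Fin n) ℂ)
    (θ : Finset ℕ) (hθ : θ ⊆ Finset.Icc 1 m)
    (Q : Set (Fin d → ℝ)) (hQmeas : MeasurableSet Q) (hQfin : volume Q < ⊤)
    (Mc : ℕ → Matrix (Fin n) (Fin n) ℂ)
    (hMc : ∀ i k l, Mc i k l = ⨍ y in Q, B i y k l)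
    (x y : Fin d → ℝ) :
    ((-1 : ℂ) ^ θ.card) •
        ∑ σ ∈ θ.powerset, ((-1 : ℂ) ^ (θ.card - σ.card)) •
          (prodRev (fun i => B i x) σ * prodFwd (fun i => B i y) (θ \ σ)) =
      ∑ σ ∈ θ.powerset,
        (∑ α ∈ σ.powerset, ((-1 : ℂ) ^ (θ.card - α.card)) •
            (prodRev (fun i => B i x) α * prodFwd Mc (σ \ α))) *
        (∑ β ∈ (θ \ σ).powerset, ((-1 : ℂ) ^ (θ.card - β.card)) •
            (prodRev Mc β * prodFwd (fun i => B i y) ((θ \ σ) \ β))) := by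
  classical
  have hsgn : ∀ p q : ℕ, p % 2 = q % 2 → (-1 : ℂ) ^ p = (-1 : ℂ) ^ q := by
    intro p q h
    conv_lhs => rw [← Nat.div_add_mod p 2]
    conv_rhs => rw [← Nat.div_add_mod q 2]
    rw [pow_add, pow_add, pow_mul, pow_mul, neg_one_sq, one_pow, one_pow, h]
  rw [smul_sum]
  have hL : ∀ σ ∈ θ.powerset,
      ((-1 : ℂ) ^ θ.card) • (((-1 : ℂ) ^ (θ.card - σ.card)) •
        (prodRev (fun i => B i x) σ * prodFwd (fun i => B i y) (θ \ σ))) =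
      ((-1 : ℂ) ^ σ.card) •
        (prodRev (fun i => B i x) σ * prodFwd (fun i => B i y) (θ \ σ)) := by
    intro σ hσ
    have hs := card_le_card (mem_powerset.mp hσ)
    rw [smul_smul, ← pow_add, hsgn (θ.card + (θ.card - σ.card)) σ.card (by omega)]
  rw [Finset.sum_congr rfl hL]
  have hR1 : ∀ σ ∈ θ.powerset,
      (∑ α ∈ σ.powerset, ((-1 : ℂ) ^ (θ.card - α.card)) •
          (prodRev (fun i => B i x) α * prodFwd Mc (σ \ α))) *
      (∑ β ∈ (θ \ σ).powerset, ((-1 : ℂ) ^ (θ.card - β.card)) •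
          (prodRev Mc β * prodFwd (fun i => B i y) ((θ \ σ) \ β))) =
      ∑ α ∈ σ.powerset, ∑ β ∈ (θ \ σ).powerset, ((-1 : ℂ) ^ (α.card + β.card)) •
          (prodRev (fun i => B i x) α * prodFwd Mc (σ \ α) *
            (prodRev Mc β * prodFwd (fun i => B i y) ((θ \ σ) \ β))) := by
    intro σ hσ
    rw [Finset.sum_mul_sum]
    refine Finset.sum_congr rfl fun α hα => Finset.sum_congr rfl fun β hβ => ?_
    have ha : α.card ≤ θ.card :=
      card_le_card ((mem_powerset.mp hα).trans (mem_powerset.mp hσ))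
    have hb : β.card ≤ θ.card :=
      card_le_card ((mem_powerset.mp hβ).trans sdiff_subset)
    rw [smul_mul_smul_comm, ← pow_add, hsgn (θ.card - α.card + (θ.card - β.card))
      (α.card + β.card) (by omega)]
  rw [Finset.sum_congr rfl hR1]
  rw [sum_powerset_sub θ (fun σ α => ∑ β ∈ (θ \ σ).powerset,
      ((-1 : ℂ) ^ (α.card + β.card)) •
        (prodRev (fun i => B i x) α * prodFwd Mc (σ \ α) *
          (prodRev Mc β * prodFwd (fun i => B i y) ((θ \ σ) \ β))))]
  refine Finset.sum_congr rfl fun α hα => ?_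
  have hαθ : α ⊆ θ := mem_powerset.mp hα
  have trans : ∀ γ ∈ (θ \ α).powerset,
      (∑ β ∈ (θ \ (α ∪ γ)).powerset, ((-1 : ℂ) ^ (α.card + β.card)) •
        (prodRev (fun i => B i x) α * prodFwd Mc ((α ∪ γ) \ α) *
          (prodRev Mc β * prodFwd (fun i => B i y) ((θ \ (α ∪ γ)) \ β)))) =
      ∑ β ∈ ((θ \ α) \ γ).powerset, ((-1 : ℂ) ^ (α.card + β.card)) •
        (prodRev (fun i => B i x) α * prodFwd Mc γ *
          (prodRev Mc β * prodFwd (fun i => B i y) (((θ \ α) \ γ) \ β))) := by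
    intro γ hγ
    have hγ' : γ ⊆ θ \ α := mem_powerset.mp hγ
    have h1 : (α ∪ γ) \ α = γ := union_sdiff_cancel_left (subset_sdiff.mp hγ').2.symm
    have h2 : θ \ (α ∪ γ) = (θ \ α) \ γ := by
      ext b; simp only [mem_sdiff, mem_union, not_or]; tauto
    rw [h1, h2]
  rw [Finset.sum_congr rfl trans,
    middle_collapse Mc (θ \ α) (prodRev (fun i => B i x) α)
      (prodFwd (fun i => B i y)) α.card]
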